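/- With notation as above: let $h \in C$ and suppose $G = \operatorname{conv}(W' \cdot h)$ is a proper exposed face of $\Xi_h = \operatorname{conv}(W \cdot h)$ containing $h$ (so $1 \in W' \subseteq W$). Then there exists some $i \in I$ such that $W' \subseteq W^{(i)}$, the standard subgroup generated by all simple reflections except $s_i$. -/

import Mathlib

open scoped Pointwise

/-- The Coxeter matrix entry attached to a product `a_ij * a_ji` of entries of a
generalized Cartan matrix, via the standard table (`0` encodes `∞`). -/
def gcmCoxeterEntry (p : ℤ) : ℕ :=
  if p = 0 then 2 else if p = 1 then 3 else if p = 2 then 4 else if p = 3 then 6 else 0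

/-- The Weyl group of a symmetrizable generalized Cartan matrix, together with its action
on the real Cartan subalgebra of a free and cofree Kac–Moody root datum. -/
structure KMWeyl (n : ℕ) (V : Type*) [AddCommGroup V] [Module ℝ V]
    (W : Type*) [Group W] (M : CoxeterMatrix (Fin n)) where
  /-- the generalized Cartan matrix -/
  A : Matrix (Fin n) (Fin n) ℤ
  diag : ∀ i, A i i = 2
  offDiag : ∀ i j, i ≠ j → A i j ≤ 0
  zeroIff : ∀ i j, (A i j = 0 ↔ A j i = 0)
  symmetrizable : ∃ D B : Matrix (Fin n) (Fin n) ℝ, D.IsDiag ∧ B.IsSymm ∧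
    A.map (Int.cast : ℤ → ℝ) = D * B
  coxMat : ∀ i j, i ≠ j → M i j = gcmCoxeterEntry (A i j * A j i)
  /-- the Coxeter system structure on the Weyl group -/
  cs : CoxeterSystem M W
  /-- the linear action of the Weyl group on the Cartan subalgebra -/
  ρ : W →* (V →ₗ[ℝ] V)
  /-- the simple roots -/
  α : Fin n → (V →ₗ[ℝ] ℝ)
  /-- the simple coroots -/
  cor : Fin n → V
  pairing : ∀ i j, α j (cor i) = (A i j : ℝ)
  refl : ∀ i v, ρ (cs.simple i) v = v - α i v • cor i
  freeRoots : LinearIndependent ℝ α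
  cofree : LinearIndependent ℝ cor

namespace KMWeyl

variable {n : ℕ} {V : Type*} [AddCommGroup V] [Module ℝ V]
  {W : Type*} [Group W] {M : CoxeterMatrix (Fin n)}

/-- The orbit of a point `h` under the Weyl group. -/
def orb (K : KMWeyl n V W M) (h : V) : Set V := Set.range fun w => K.ρ w h

/-- The standard subgroup generated by the simple reflections indexed by `J`. -/
def std (K : KMWeyl n V W M) (J : Set (Fin n)) : Subgroup W :=
  Subgroup.closure (K.cs.simple '' J)

/-- The support of `w`: the indices occurring in every reduced word for `w`. -/
def supp (K : KMWeyl n V W M) (w : W) : Set (Fin n) :=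
  {i | ∀ l : List (Fin n), K.cs.wordProd l = w → l.length = K.cs.length w → i ∈ l}

end KMWeyl

namespace KMFace

/-- Coefficients of rank-2 roots: `useq a b r` gives the coefficients `(p, q)` of the root
obtained from `α_i` by alternately applying the reflections `s_j, s_i, s_j, …` (`r` times). -/
def useq (a b : ℤ) : ℕ → ℤ × ℤ
  | 0 => (1, 0)
  | (r+1) =>
    if Even r then ((useq a b r).1, -b * (useq a b r).1 - (useq a b r).2)
    else (-a * (useq a b r).2 - (useq a b r).1, (useq a b r).2)

lemma useq_nonneg_big (a b : ℤ) (ha : a ≤ 0) (hb : b ≤ 0) (hab : 4 ≤ a * b) (r : ℕ) :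
    0 ≤ (useq a b r).1 ∧ 0 ≤ (useq a b r).2 := by
  suffices h : 0 ≤ (useq a b r).1 ∧ 0 ≤ (useq a b r).2 ∧
      (Even r → 2 * (useq a b r).2 ≤ -b * (useq a b r).1) ∧
      (¬ Even r → 2 * (useq a b r).1 ≤ -a * (useq a b r).2) by
    exact ⟨h.1, h.2.1⟩
  induction r with
  | zero => simp [useq]; omega
  | succ r ih =>
    obtain ⟨hp, hq, hev, hodd⟩ := ih
    by_cases hr : Even r
    · have h2 := hev hr
      simp only [useq, if_pos hr]
      have hr' : ¬ Even (r + 1) := by simp [Nat.even_add_one, hr]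
      refine ⟨hp, by nlinarith, by simp [hr'], fun _ => ?_⟩
      nlinarith
    · have h2 := hodd hr
      simp only [useq, if_neg hr]
      have hr' : Even (r + 1) := by simp [Nat.even_add_one, hr]
      refine ⟨by nlinarith, hq, fun _ => ?_, by simp [hr']⟩
      nlinarith

lemma useq_even (a b : ℤ) (r : ℕ) (h : Even r) :
    useq a b (r+1) = ((useq a b r).1, -b * (useq a b r).1 - (useq a b r).2) := by
  simp [useq, h]

lemma useq_odd (a b : ℤ) (r : ℕ) (h : ¬ Even r) :
    useq a b (r+1) = (-a * (useq a b r).2 - (useq a b r).1, (useq a b r).2) := by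
  simp [useq, h]

lemma useq_zero (a b : ℤ) : useq a b 0 = (1, 0) := rfl

lemma useq_one (a b : ℤ) : useq a b 1 = (1, -b) := by
  rw [useq_even a b 0 (by decide), useq_zero]
  simp only [Prod.mk.injEq]; constructor <;> (try trivial) <;> ring

lemma useq_two (a b : ℤ) : useq a b 2 = (a * b - 1, -b) := by
  rw [useq_odd a b 1 (by decide), useq_one]
  simp only [Prod.mk.injEq]; constructor <;> (try trivial) <;> ring

lemma useq_three (a b : ℤ) : useq a b 3 = (a * b - 1, -b * (a * b - 2)) := by
  rw [useq_even a b 2 (by decide), useq_two]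
  simp only [Prod.mk.injEq]; constructor <;> (try trivial) <;> ring

lemma useq_four (a b : ℤ) :
    useq a b 4 = ((a*b) * (a*b) - 3 * (a*b) + 1, -b * (a * b - 2)) := by
  rw [useq_odd a b 3 (by decide), useq_three]
  simp only [Prod.mk.injEq]; constructor <;> (try trivial) <;> ring

lemma useq_five (a b : ℤ) :
    useq a b 5 = ((a*b) * (a*b) - 3 * (a*b) + 1, -b * ((a*b) * (a*b) - 4 * (a*b) + 3)) := by
  rw [useq_even a b 4 (by decide), useq_four]
  simp only [Prod.mk.injEq]; constructor <;> (try trivial) <;> ring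

lemma useq_nonneg (a b : ℤ) (ha : a ≤ 0) (hb : b ≤ 0) (r : ℕ)
    (hr : gcmCoxeterEntry (a * b) = 0 ∨ r + 1 ≤ gcmCoxeterEntry (a * b)) :
    0 ≤ (useq a b r).1 ∧ 0 ≤ (useq a b r).2 := by
  have hp : 0 ≤ a * b := by nlinarith [mul_nonneg (neg_nonneg.2 ha) (neg_nonneg.2 hb)]
  by_cases h4 : 4 ≤ a * b
  · exact useq_nonneg_big a b ha hb h4 r
  · have hcase : a * b = 0 ∨ a * b = 1 ∨ a * b = 2 ∨ a * b = 3 := by omega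
    have hgne : gcmCoxeterEntry (a * b) ≠ 0 := by
      rcases hcase with h | h | h | h <;> simp [gcmCoxeterEntry, h]
    have hrle : r + 1 ≤ gcmCoxeterEntry (a * b) := hr.resolve_left hgne
    rcases hcase with h | h | h | h <;>
      [skip; skip; skip; skip] <;>
      rw [h] at hrle <;> simp only [gcmCoxeterEntry] at hrle <;> norm_num at hrle <;>
      (have hrb : r ≤ 5 := by omega) <;>
      interval_cases r <;>
        simp only [useq_zero, useq_one, useq_two, useq_three, useq_four, useq_five] <;>
        constructor <;> (first | nlinarith | (simp only [h]; nlinarith))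

end KMFace

namespace KMFace
open CoxeterSystem

variable {n : ℕ} {V : Type*} [AddCommGroup V] [Module ℝ V]
  {W : Type*} [Group W] {M : CoxeterMatrix (Fin n)} (K : KMWeyl n V W M)

lemma rho_mul (x y : W) : K.ρ (x * y) = K.ρ x ∘ₗ K.ρ y := by
  rw [map_mul]; rfl

lemma comp_simple (μ : V →ₗ[ℝ] ℝ) (k : Fin n) :
    μ ∘ₗ K.ρ (K.cs.simple k) = μ - μ (K.cor k) • K.α k := by
  ext v
  simp [K.refl k v, map_sub, map_smul, mul_comm]

/-- The rank-2 root computation: applying alternating reflections to `α i`. -/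
lemma root_alt (i j : Fin n) (r : ℕ) :
    K.α i ∘ₗ K.ρ (K.cs.wordProd (alternatingWord i j r).reverse)
      = ((useq (K.A i j) (K.A j i) r).1 : ℝ) • K.α i
        + ((useq (K.A i j) (K.A j i) r).2 : ℝ) • K.α j := by
  induction r with
  | zero =>
    simp only [alternatingWord, List.reverse_nil, CoxeterSystem.wordProd_nil, map_one,
      useq_zero, Int.cast_one, Int.cast_zero, one_smul, zero_smul, add_zero]
    rfl
  | succ r ih =>
    by_cases hr : Even r
    · rw [alternatingWord_succ', if_pos hr, List.reverse_cons, K.cs.wordProd_append,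
        K.cs.wordProd_singleton, rho_mul, ← LinearMap.comp_assoc, ih, LinearMap.add_comp,
        LinearMap.smul_comp, LinearMap.smul_comp, comp_simple, comp_simple]
      rw [useq_even _ _ r hr]
      simp only [LinearMap.sub_apply, LinearMap.smul_apply, K.pairing, smul_eq_mul]
      rw [K.diag j]
      push_cast
      module
    · rw [alternatingWord_succ', if_neg hr, List.reverse_cons, K.cs.wordProd_append,
        K.cs.wordProd_singleton, rho_mul, ← LinearMap.comp_assoc, ih, LinearMap.add_comp,
        LinearMap.smul_comp, LinearMap.smul_comp, comp_simple, comp_simple]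
      rw [useq_odd _ _ r hr]
      simp only [LinearMap.sub_apply, LinearMap.smul_apply, K.pairing, smul_eq_mul]
      rw [K.diag i]
      push_cast
      module

/-- A reduced word `i :: l` with all letters of `l` in `{i, j}` is an alternating word. -/
lemma alt_of_reduced : ∀ (l : List (Fin n)) (i j : Fin n), (∀ k ∈ l, k = i ∨ k = j) →
    K.cs.IsReduced (i :: l) → i :: l = (alternatingWord j i (l.length + 1)).reverse := by
  intro l
  induction l with
  | nil =>
    intro i j _ _
    simp [alternatingWord]
  | cons c t ih =>
    intro i j hlet hred
    have hc : c = j := by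
      rcases hlet c (by simp) with hci | hcj
      · exfalso
        subst hci
        have h1 : K.cs.wordProd (c :: c :: t) = K.cs.wordProd t := by
          rw [K.cs.wordProd_cons, K.cs.wordProd_cons, ← mul_assoc,
            K.cs.simple_mul_simple_self, one_mul]
        have h2 := K.cs.length_wordProd_le t
        unfold CoxeterSystem.IsReduced at hred
        rw [h1] at hred
        simp only [List.length_cons] at hred
        omega
      · exact hcj
    subst hc
    have ht : K.cs.IsReduced (c :: t) := by
      have := hred.drop 1
      simpa using this
    have hlet' : ∀ k ∈ t, k = c ∨ k = i := by
      intro k hk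
      rcases hlet k (by simp [hk]) with h | h
      · exact Or.inr h
      · exact Or.inl h
    have hih := ih c i hlet' ht
    have halt : alternatingWord c i (t.length + 1 + 1)
        = (alternatingWord i c (t.length + 1)).concat i := alternatingWord_succ c i _
    rw [List.length_cons, halt, List.concat_eq_append, List.reverse_append]
    simp only [List.reverse_cons, List.reverse_nil, List.nil_append, List.singleton_append]
    rw [← hih]

/-- Strip left descents in `{i, j}` from `w`, obtaining a minimal coset representative. -/
lemma strip : ∀ (N : ℕ) (w : W), K.cs.length w ≤ N → ∀ i j : Fin n,
    ∃ (v : W) (l : List (Fin n)), (∀ k ∈ l, k = i ∨ k = j) ∧ w = K.cs.wordProd l * v ∧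
      K.cs.length w = l.length + K.cs.length v ∧
      ¬ K.cs.IsLeftDescent v i ∧ ¬ K.cs.IsLeftDescent v j := by
  intro N
  induction N with
  | zero =>
    intro w hw i j
    refine ⟨w, [], by simp, by simp, by simp, ?_, ?_⟩ <;>
      · intro hd
        unfold CoxeterSystem.IsLeftDescent at hd
        omega
  | succ N ihN =>
    intro w hw i j
    by_cases hdi : K.cs.IsLeftDescent w i
    · have hlen : K.cs.length (K.cs.simple i * w) + 1 = K.cs.length w := by
        rcases K.cs.length_simple_mul w i with h | h
        · exfalso; unfold CoxeterSystem.IsLeftDescent at hdi; omega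
        · exact h
      obtain ⟨v, l, hlet, hprod, hsum, hv1, hv2⟩ :=
        ihN (K.cs.simple i * w) (by omega) i j
      refine ⟨v, i :: l, ?_, ?_, ?_, hv1, hv2⟩
      · intro k hk
        rcases List.mem_cons.mp hk with rfl | hk
        · exact Or.inl rfl
        · exact hlet k hk
      · rw [K.cs.wordProd_cons, mul_assoc, ← hprod, ← mul_assoc,
          K.cs.simple_mul_simple_self, one_mul]
      · simp only [List.length_cons]; omega
    · by_cases hdj : K.cs.IsLeftDescent w j
      · have hlen : K.cs.length (K.cs.simple j * w) + 1 = K.cs.length w := by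
          rcases K.cs.length_simple_mul w j with h | h
          · exfalso; unfold CoxeterSystem.IsLeftDescent at hdj; omega
          · exact h
        obtain ⟨v, l, hlet, hprod, hsum, hv1, hv2⟩ :=
          ihN (K.cs.simple j * w) (by omega) i j
        refine ⟨v, j :: l, ?_, ?_, ?_, hv1, hv2⟩
        · intro k hk
          rcases List.mem_cons.mp hk with rfl | hk
          · exact Or.inr rfl
          · exact hlet k hk
        · rw [K.cs.wordProd_cons, mul_assoc, ← hprod, ← mul_assoc,
            K.cs.simple_mul_simple_self, one_mul]
        · simp only [List.length_cons]; omega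
      · exact ⟨w, [], by simp, by simp, by simp, hdi, hdj⟩

/-- The key positivity statement: if `s i` is not a left descent of `u`, then the functional
`α i ∘ ρ u` is a nonnegative combination of simple roots. -/
lemma root_pos_cone : ∀ (N : ℕ) (u : W) (i : Fin n), K.cs.length u ≤ N →
    ¬ K.cs.IsLeftDescent u i →
    ∃ c : Fin n → ℝ, (∀ k, 0 ≤ c k) ∧ K.α i ∘ₗ K.ρ u = ∑ k, c k • K.α k := by
  intro N
  induction N with
  | zero =>
    intro u i hu _
    have hu1 : u = 1 := K.cs.length_eq_zero_iff.mp (by omega)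
    subst hu1
    refine ⟨fun k => if k = i then 1 else 0, fun k => by positivity, ?_⟩
    rw [map_one]
    simp only [ite_smul, one_smul, zero_smul]
    rw [Finset.sum_ite_eq' Finset.univ i K.α]
    simp only [Finset.mem_univ, if_true]
    rfl
  | succ N ihN =>
    intro u i hu hdi
    by_cases hu1 : u = 1
    · subst hu1
      refine ⟨fun k => if k = i then 1 else 0, fun k => by positivity, ?_⟩
      rw [map_one]
      simp only [ite_smul, one_smul, zero_smul]
      rw [Finset.sum_ite_eq' Finset.univ i K.α]
      simp only [Finset.mem_univ, if_true]
      rfl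
    · obtain ⟨j, hdj⟩ := K.cs.exists_leftDescent_of_ne_one hu1
      have hij : j ≠ i := fun h => hdi (h ▸ hdj)
      obtain ⟨v, l, hlet, hprod, hsum, hvi, hvj⟩ := strip K (N + 1) u hu i j
      have hlne : l ≠ [] := by
        intro h
        subst h
        simp only [K.cs.wordProd_nil, one_mul] at hprod
        exact hvj (hprod ▸ hdj)
      have hllen : 1 ≤ l.length := by
        cases l with
        | nil => exact absurd rfl hlne
        | cons a t => simp
      have hlv : K.cs.length v ≤ N := by omega
      -- `i :: l` is reduced
      have hlul : K.cs.length (K.cs.simple i * u) = K.cs.length u + 1 := by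
        rcases K.cs.length_simple_mul u i with h | h
        · exact h
        · exfalso; exact hdi (by unfold CoxeterSystem.IsLeftDescent; omega)
      have hred_il : K.cs.IsReduced (i :: l) := by
        have h1 : K.cs.simple i * u = K.cs.wordProd (i :: l) * v := by
          rw [K.cs.wordProd_cons, mul_assoc, ← hprod]
        have h2 : K.cs.length (K.cs.simple i * u) ≤
            K.cs.length (K.cs.wordProd (i :: l)) + K.cs.length v := by
          rw [h1]; exact K.cs.length_mul_le _ _
        have h3 : K.cs.length (K.cs.wordProd (i :: l)) ≤ l.length + 1 := by
          have := K.cs.length_wordProd_le (i :: l)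
          simpa using this
        unfold CoxeterSystem.IsReduced
        simp only [List.length_cons]
        omega
      have halt := alt_of_reduced K l i j hlet hred_il
      -- length bound from `not_isReduced_alternatingWord`
      have hbound : M j i = 0 ∨ l.length + 1 ≤ M j i := by
        by_contra hcon
        push_neg at hcon
        obtain ⟨hMne, hMlt⟩ := hcon
        have hnr := K.cs.not_isReduced_alternatingWord j i (m := l.length + 1) hMne (by omega)
        rw [halt] at hred_il
        exact hnr ((K.cs.isReduced_reverse_iff _).mp hred_il)
      have hl_eq : l = (alternatingWord i j l.length).reverse := by
        have h1 : alternatingWord j i (l.length + 1)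
            = (alternatingWord i j l.length).concat i := alternatingWord_succ j i _
        rw [h1, List.concat_eq_append, List.reverse_append] at halt
        simp only [List.reverse_cons, List.reverse_nil, List.nil_append,
          List.singleton_append, List.cons.injEq] at halt
        exact halt.2
      -- coefficients from the rank 2 computation
      have hM : M j i = gcmCoxeterEntry (K.A i j * K.A j i) := by
        rw [K.coxMat j i hij, mul_comm]
      have hcoef := useq_nonneg (K.A i j) (K.A j i) (K.offDiag i j (Ne.symm hij))
        (K.offDiag j i hij) l.length (by rw [← hM]; exact hbound)
      -- the root of u
      obtain ⟨c1, hc1n, hc1⟩ := ihN v i hlv hvi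
      obtain ⟨c2, hc2n, hc2⟩ := ihN v j hlv hvj
      set P : ℝ := ((useq (K.A i j) (K.A j i) l.length).1 : ℝ) with hP
      set Q : ℝ := ((useq (K.A i j) (K.A j i) l.length).2 : ℝ) with hQ
      have hPn : 0 ≤ P := by rw [hP]; exact_mod_cast hcoef.1
      have hQn : 0 ≤ Q := by rw [hQ]; exact_mod_cast hcoef.2
      have hroot : K.α i ∘ₗ K.ρ u = P • (K.α i ∘ₗ K.ρ v) + Q • (K.α j ∘ₗ K.ρ v) := by
        rw [hprod, rho_mul, ← LinearMap.comp_assoc]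
        rw [hl_eq] at *
        rw [root_alt]
        rw [LinearMap.add_comp, LinearMap.smul_comp, LinearMap.smul_comp]
      refine ⟨fun k => P * c1 k + Q * c2 k,
        fun k => add_nonneg (mul_nonneg hPn (hc1n k)) (mul_nonneg hQn (hc2n k)), ?_⟩
      rw [hroot, hc1, hc2]
      rw [Finset.smul_sum, Finset.smul_sum, ← Finset.sum_add_distrib]
      congr 1
      ext k
      rw [smul_smul, smul_smul, ← add_smul]

/-- Strict positivity of the root of a non-descent at a strictly dominant point. -/
lemma root_pos_at (h : V) (hC : ∀ i, 0 < K.α i h) (u : W) (i : Fin n)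
    (hd : ¬ K.cs.IsLeftDescent u i) : 0 < K.α i (K.ρ u h) := by
  obtain ⟨c, hcn, hc⟩ := root_pos_cone K (K.cs.length u) u i le_rfl hd
  have hval : K.α i (K.ρ u h) = ∑ k, c k * K.α k h := by
    have := congrArg (fun φ : V →ₗ[ℝ] ℝ => φ h) hc
    simpa [LinearMap.sum_apply] using this
  have hterm : ∀ k ∈ Finset.univ, (0:ℝ) ≤ c k * K.α k h :=
    fun k _ => mul_nonneg (hcn k) (hC k).le
  have hnn : 0 ≤ K.α i (K.ρ u h) := hval ▸ Finset.sum_nonneg hterm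
  rcases hnn.lt_or_eq with hlt | heq
  · exact hlt
  · exfalso
    have hzero : ∀ k ∈ Finset.univ, c k * K.α k h = 0 :=
      (Finset.sum_eq_zero_iff_of_nonneg hterm).mp (by rw [← hval, ← heq])
    have hck : ∀ k, c k = 0 := by
      intro k
      have := hzero k (Finset.mem_univ k)
      rcases mul_eq_zero.mp this with h0 | h0
      · exact h0
      · exact absurd h0 (hC k).ne'
    have hfun : K.α i ∘ₗ K.ρ u = 0 := by
      rw [hc]
      refine Finset.sum_eq_zero fun k _ => by rw [hck k, zero_smul]
    have h2 : K.α i ((K.ρ u) ((K.ρ u⁻¹) (K.cor i))) = 0 := by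
      have := congrArg (fun φ : V →ₗ[ℝ] ℝ => φ ((K.ρ u⁻¹) (K.cor i))) hfun
      simpa using this
    rw [← Module.End.mul_apply, ← map_mul, mul_inv_cancel, map_one, Module.End.one_apply,
      K.pairing i i, K.diag i] at h2
    norm_num at h2

/-- Along a reduced word, `h - ρ w h` is a nonnegative combination of the coroots,
with strictly positive coefficients on the letters of the word. -/
lemma orbit_diff (h : V) (hC : ∀ i, 0 < K.α i h) :
    ∀ (l : List (Fin n)), K.cs.IsReduced l →
      ∃ c : Fin n → ℝ, (∀ k, 0 ≤ c k) ∧ (∀ k ∈ l, 0 < c k) ∧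
        h - K.ρ (K.cs.wordProd l) h = ∑ k, c k • K.cor k := by
  intro l
  induction l with
  | nil =>
    intro _
    exact ⟨0, fun k => le_rfl, by simp, by simp⟩
  | cons k t ih =>
    intro hred
    have ht : K.cs.IsReduced t := by
      have := hred.drop 1
      simpa using this
    obtain ⟨c', hc'n, hc'pos, hc'⟩ := ih ht
    have hnd : ¬ K.cs.IsLeftDescent (K.cs.wordProd t) k := by
      unfold CoxeterSystem.IsLeftDescent
      rw [← K.cs.wordProd_cons]
      unfold CoxeterSystem.IsReduced at hred ht
      simp only [List.length_cons] at hred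
      omega
    have hpos := root_pos_at K h hC (K.cs.wordProd t) k hnd
    set ε : ℝ := K.α k (K.ρ (K.cs.wordProd t) h) with hε
    refine ⟨fun m => c' m + if m = k then ε else 0, ?_, ?_, ?_⟩
    · intro m
      refine add_nonneg (hc'n m) ?_
      split <;> simp [hpos.le]
    · intro m hm
      rcases List.mem_cons.mp hm with rfl | hm
      · simpa using add_pos_of_nonneg_of_pos (hc'n m) (by simpa using hpos)
      · refine add_pos_of_pos_of_nonneg (hc'pos m hm) ?_
        split <;> simp [hpos.le]
    · rw [K.cs.wordProd_cons, map_mul, Module.End.mul_apply, K.refl, ← hε]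
      have : h - (K.ρ (K.cs.wordProd t) h - ε • K.cor k)
          = (h - K.ρ (K.cs.wordProd t) h) + ε • K.cor k := by abel
      rw [this, hc']
      have hsingle : ∑ m, (if m = k then ε else 0) • K.cor m = ε • K.cor k := by
        simp only [ite_smul, zero_smul]
        rw [Finset.sum_ite_eq' Finset.univ k (fun m => ε • K.cor m)]
        simp
      rw [← hsingle, ← Finset.sum_add_distrib]
      congr 1
      ext m
      rw [add_smul]

lemma wordProd_mem_std (i0 : Fin n) :
    ∀ l : List (Fin n), (∀ k ∈ l, k ≠ i0) →
      K.cs.wordProd l ∈ K.std {j | j ≠ i0} := by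
  intro l
  induction l with
  | nil => intro _; rw [K.cs.wordProd_nil]; exact one_mem _
  | cons k t ih =>
    intro hlet
    rw [K.cs.wordProd_cons]
    refine mul_mem ?_ (ih fun m hm => hlet m (List.mem_cons_of_mem k hm))
    exact Subgroup.subset_closure ⟨k, hlet k List.mem_cons_self, rfl⟩

end KMFace


/-- A proper exposed face of `Ξ_h` containing `h` has its defining set of Weyl group
elements contained in some maximal standard subgroup `W^{(i)}`. -/
theorem stmt_7 {n : ℕ} {V : Type*} [NormedAddCommGroup V] [NormedSpace ℝ V]
    [FiniteDimensional ℝ V]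
    {W : Type*} [Group W] {M : CoxeterMatrix (Fin n)} (K : KMWeyl n V W M)
    (h : V) (hC : ∀ i, 0 < K.α i h)
    (W' : Set W) (hone : (1 : W) ∈ W')
    (G : Set V) (hG : G = convexHull ℝ ((fun w => K.ρ w h) '' W'))
    (hexp : IsExposed ℝ (convexHull ℝ (K.orb h)) G)
    (hproper : G ≠ convexHull ℝ (K.orb h)) :
    ∃ i : Fin n, W' ⊆ (K.std {j | j ≠ i} : Set W) := by
  classical
  have hhG : h ∈ G := by
    rw [hG]
    exact subset_convexHull ℝ _ ⟨1, hone, by simp⟩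
  have hhA : h ∈ convexHull ℝ (K.orb h) :=
    subset_convexHull ℝ _ ⟨1, by simp⟩
  obtain ⟨f, hGf⟩ := hexp ⟨h, hhG⟩
  have hmax : ∀ y ∈ convexHull ℝ (K.orb h), f y ≤ f h := by
    rw [hGf] at hhG
    exact hhG.2
  have horb : ∀ w : W, K.ρ w h ∈ convexHull ℝ (K.orb h) :=
    fun w => subset_convexHull ℝ _ ⟨w, rfl⟩
  have horbmax : ∀ w : W, f (K.ρ w h) ≤ f h := fun w => hmax _ (horb w)
  have hcor : ∀ i, 0 ≤ f (K.cor i) := by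
    intro i
    have h1 := horbmax (K.cs.simple i)
    have h2 : f (K.ρ (K.cs.simple i) h) = f h - K.α i h * f (K.cor i) := by
      rw [K.refl, map_sub, map_smul, smul_eq_mul]
    rw [h2] at h1
    nlinarith [hC i]
  by_cases hex : ∃ i0, 0 < f (K.cor i0)
  · obtain ⟨i0, hi0⟩ := hex
    refine ⟨i0, fun w hw => ?_⟩
    have hwG : K.ρ w h ∈ G := by
      rw [hG]; exact subset_convexHull ℝ _ ⟨w, hw, rfl⟩
    have heq : f (K.ρ w h) = f h := by
      rw [hGf] at hwG
      exact le_antisymm (horbmax w) (hwG.2 h hhA)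
    obtain ⟨lw, hlred, hlw⟩ := K.cs.exists_reduced_word' w
    obtain ⟨c, hcn, hcpos, hsum⟩ := KMFace.orbit_diff K h hC lw hlred
    have hfs : ∑ k, c k * f (K.cor k) = 0 := by
      have h3 := congrArg f hsum
      rw [← hlw, map_sub, heq, sub_self, map_sum] at h3
      simp only [map_smul, smul_eq_mul] at h3
      exact h3.symm
    have hzero : ∀ k ∈ Finset.univ, c k * f (K.cor k) = 0 :=
      (Finset.sum_eq_zero_iff_of_nonneg
        (fun k _ => mul_nonneg (hcn k) (hcor k))).mp hfs
    have hci0 : c i0 = 0 := by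
      rcases mul_eq_zero.mp (hzero i0 (Finset.mem_univ i0)) with h0 | h0
      · exact h0
      · exact absurd h0 hi0.ne'
    have hnotin : i0 ∉ lw := fun hmem => (hcpos i0 hmem).ne' hci0
    rw [hlw]
    exact KMFace.wordProd_mem_std K i0 lw (fun k hk hki => hnotin (hki ▸ hk))
  · exfalso
    push_neg at hex
    have hcor0 : ∀ i, f (K.cor i) = 0 := fun i => le_antisymm (hex i) (hcor i)
    have hconst : ∀ x ∈ convexHull ℝ (K.orb h), f x = f h := by
      have hsub : K.orb h ⊆ {z | f z = f h} := by
        rintro z ⟨w, rfl⟩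
        obtain ⟨lw, hlred, hlw⟩ := K.cs.exists_reduced_word' w
        obtain ⟨c, hcn, _, hsum⟩ := KMFace.orbit_diff K h hC lw hlred
        have h3 := congrArg f hsum
        rw [← hlw, map_sub, map_sum] at h3
        simp only [map_smul, smul_eq_mul, hcor0, mul_zero, Finset.sum_const_zero] at h3
        show f (K.ρ w h) = f h
        linarith
      have hcvx : Convex ℝ {z | f z = f h} :=
        convex_hyperplane ⟨fun x y => map_add f x y, fun c x => map_smul f c x⟩ (f h)
      exact fun x hx => convexHull_min hsub hcvx hx
    apply hproper
    rw [hGf]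
    ext x
    refine ⟨fun hx => hx.1, fun hx => ⟨hx, fun y hy => ?_⟩⟩
    rw [hconst y hy, hconst x hx]
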